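/- Let $t_0 \ge 1$, let $\pi_1,\ldots,\pi_{t_0} \ge 0$, let $t > 0$, and let $0 = \zeta_0 \le \zeta_1 \le \cdots \le \zeta_{t_0}$. Suppose that for every $t_1 \in \{1,\ldots,t_0\}$ one has $\sum_{s=1}^{t_1} s\,\pi_s \le t\,\zeta_{t_1}$. Then $\sum_{s=1}^{t_0} \pi_s \le t \sum_{s=1}^{t_0} \frac{\zeta_s - \zeta_{s-1}}{s}$. -/

import Mathlib

open Finset

lemma abel_aux (f : ℕ → ℝ) (hf0 : f 0 = 0) :
    ∀ n, 1 ≤ n → (∀ s ≤ n, 0 ≤ f s) →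
      f n / n ≤ ∑ s ∈ Finset.Icc 1 n, (f s - f (s - 1)) / (s : ℝ) := by
  intro n
  induction n with
  | zero => omega
  | succ m ih =>
    intro _ hpos
    rcases Nat.eq_zero_or_pos m with hm | hm
    · subst hm
      simp [hf0]
    · rw [Finset.sum_Icc_succ_top (by omega : 1 ≤ m + 1)]
      have hih := ih hm (fun s hs => hpos s (le_trans hs (Nat.le_succ m)))
      have hmp : (0:ℝ) < m := by exact_mod_cast hm
      have hmp1 : (0:ℝ) < (m:ℝ) + 1 := by linarith
      have hfm : 0 ≤ f m := hpos m (Nat.le_succ m)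
      have h1 : f m / ((m:ℝ) + 1) ≤ f m / m :=
        div_le_div_of_nonneg_left hfm hmp (by linarith)
      have : f (m + 1) / ((m:ℝ) + 1)
          = f m / ((m:ℝ) + 1) + (f (m + 1) - f m) / ((m:ℝ) + 1) := by ring
      simp only [Nat.add_sub_cancel, Nat.cast_add, Nat.cast_one]
      linarith

theorem stmt_14 (t0 : ℕ) (ht0 : 1 ≤ t0) (π : ℕ → ℝ) (hπ : ∀ s, 0 ≤ π s)
    (t : ℝ) (ht : 0 < t) (ζ : ℕ → ℝ) (hζ0 : ζ 0 = 0)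
    (hζmono : ∀ s < t0, ζ s ≤ ζ (s + 1))
    (h : ∀ t1 ∈ Finset.Icc 1 t0, ∑ s ∈ Finset.Icc 1 t1, (s : ℝ) * π s ≤ t * ζ t1) :
    ∑ s ∈ Finset.Icc 1 t0, π s ≤ t * ∑ s ∈ Finset.Icc 1 t0, (ζ s - ζ (s - 1)) / (s : ℝ) := by
  set A : ℕ → ℝ := fun s => t * ζ s - ∑ i ∈ Finset.Icc 1 s, (i : ℝ) * π i with hA
  have hA0 : A 0 = 0 := by simp [hA, hζ0]
  have hApos : ∀ s ≤ t0, 0 ≤ A s := by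
    intro s hs
    rcases Nat.eq_zero_or_pos s with h0 | h0
    · simp [h0, hA0]
    · have := h s (Finset.mem_Icc.mpr ⟨h0, hs⟩)
      simp [hA]
      linarith
  have key := abel_aux A hA0 t0 ht0 hApos
  have hdiff : ∀ s ∈ Finset.Icc 1 t0,
      t * ((ζ s - ζ (s - 1)) / (s : ℝ)) = (A s - A (s - 1)) / (s : ℝ) + π s := by
    intro s hs
    obtain ⟨h1, h2⟩ := Finset.mem_Icc.mp hs
    obtain ⟨m, rfl⟩ := Nat.exists_eq_add_of_le h1
    have hsum : ∑ i ∈ Finset.Icc 1 (1 + m), (i : ℝ) * π i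
        = (∑ i ∈ Finset.Icc 1 m, (i : ℝ) * π i) + ((1 + m : ℕ) : ℝ) * π (1 + m) := by
      rw [add_comm 1 m]
      exact Finset.sum_Icc_succ_top (by omega) _
    have hcast : (0:ℝ) < ((1 + m : ℕ) : ℝ) := by positivity
    simp only [hA, Nat.add_sub_cancel_left] at *
    field_simp
    rw [hsum]
    push_cast
    ring
  rw [Finset.mul_sum, Finset.sum_congr rfl hdiff, Finset.sum_add_distrib]
  have hAn : 0 ≤ A t0 / t0 := by
    apply div_nonneg (hApos t0 le_rfl)
    positivity
  linarith
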